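/- The Jensen–Shannon divergence and the log-determinant divergence coincide on Hermitian positive definite matrices: for all m×m Hermitian positive definite C_1, C_2, (1/2)[D_KL(C_1, (C_1+C_2)/2) + D_KL(C_2, (C_1+C_2)/2)] = log det((C_1+C_2)/2) − (1/2) log det(C_1 C_2). -/

import Mathlib

open Matrix ComplexOrder

variable {m : ℕ}

/-- Kullback–Leibler (Stein) divergence
`D_KL(A,B) = tr(A B⁻¹ − I) − log det (A B⁻¹)`. -/
noncomputable def DKL (A B : Matrix (Fin m) (Fin m) ℂ) : ℂ :=
  (A * B⁻¹ - 1).trace - Complex.log (A * B⁻¹).det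

/-- The Jensen–Shannon divergence coincides with the log-determinant divergence
on Hermitian positive definite matrices. -/
theorem js_eq_logdet
    (C₁ C₂ : Matrix (Fin m) (Fin m) ℂ) (hC₁ : C₁.PosDef) (hC₂ : C₂.PosDef) :
    (2 : ℂ)⁻¹ * (DKL C₁ ((2 : ℂ)⁻¹ • (C₁ + C₂)) + DKL C₂ ((2 : ℂ)⁻¹ • (C₁ + C₂)))
      = Complex.log ((2 : ℂ)⁻¹ • (C₁ + C₂)).det
        - (2 : ℂ)⁻¹ * Complex.log (C₁ * C₂).det := by
  set M : Matrix (Fin m) (Fin m) ℂ := (2 : ℂ)⁻¹ • (C₁ + C₂) with hMdef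
  have h2pos : (0 : ℂ) < (2 : ℂ)⁻¹ := by
    rw [Complex.lt_def]; norm_num
  have hM : M.PosDef := by
    rw [posDef_iff_dotProduct_mulVec]
    constructor
    · show Mᴴ = M
      rw [hMdef, conjTranspose_smul, conjTranspose_add, hC₁.1.eq, hC₂.1.eq]
      norm_num
    · intro x hx
      have h1 := hC₁.dotProduct_mulVec_pos hx
      have h2 := hC₂.dotProduct_mulVec_pos hx
      rw [hMdef, smul_mulVec, dotProduct_smul, smul_eq_mul, add_mulVec,
        dotProduct_add]
      exact mul_pos h2pos (add_pos h1 h2)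
  have hMdet : IsUnit M.det := hM.det_pos.ne'.isUnit
  have hMinv : M * M⁻¹ = 1 := mul_nonsing_inv _ hMdet
  -- trace part vanishes
  have h2M : C₁ + C₂ = (2 : ℂ) • M := by
    rw [hMdef, smul_smul]; norm_num
  have hsum : C₁ * M⁻¹ + C₂ * M⁻¹ = (2 : ℂ) • 1 := by
    rw [← add_mul, h2M, smul_mul_assoc, hMinv]
  have htrsum : (C₁ * M⁻¹).trace + (C₂ * M⁻¹).trace = 2 * (1 : Matrix (Fin m) (Fin m) ℂ).trace := by
    rw [← trace_add, hsum, trace_smul, smul_eq_mul]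
  have htr : (C₁ * M⁻¹ - 1).trace + (C₂ * M⁻¹ - 1).trace = 0 := by
    rw [trace_sub, trace_sub]
    linear_combination htrsum
  -- determinants are positive reals
  have hd1 := hC₁.det_pos
  have hd2 := hC₂.det_pos
  have hdM := hM.det_pos
  set r₁ : ℝ := (C₁.det).re with hr₁
  set r₂ : ℝ := (C₂.det).re with hr₂
  set rM : ℝ := (M.det).re with hrM
  have hr1pos : 0 < r₁ := (Complex.lt_def.mp hd1).1
  have hr2pos : 0 < r₂ := (Complex.lt_def.mp hd2).1
  have hrMpos : 0 < rM := (Complex.lt_def.mp hdM).1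
  have he1 : C₁.det = (r₁ : ℂ) := by
    have := (Complex.lt_def.mp hd1).2
    apply Complex.ext <;> simp [hr₁, ← this]
  have he2 : C₂.det = (r₂ : ℂ) := by
    have := (Complex.lt_def.mp hd2).2
    apply Complex.ext <;> simp [hr₂, ← this]
  have heM : M.det = (rM : ℂ) := by
    have := (Complex.lt_def.mp hdM).2
    apply Complex.ext <;> simp [hrM, ← this]
  have hdetinv : M⁻¹.det = (M.det)⁻¹ := by rw [det_nonsing_inv, Ring.inverse_eq_inv]
  have hlog1 : Complex.log (C₁ * M⁻¹).det = ((Real.log r₁ - Real.log rM : ℝ) : ℂ) := by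
    rw [det_mul, hdetinv, he1, heM, ← Complex.ofReal_inv, ← Complex.ofReal_mul,
      ← Complex.ofReal_log (by positivity), ← div_eq_mul_inv,
      Real.log_div hr1pos.ne' hrMpos.ne']
  have hlog2 : Complex.log (C₂ * M⁻¹).det = ((Real.log r₂ - Real.log rM : ℝ) : ℂ) := by
    rw [det_mul, hdetinv, he2, heM, ← Complex.ofReal_inv, ← Complex.ofReal_mul,
      ← Complex.ofReal_log (by positivity), ← div_eq_mul_inv,
      Real.log_div hr2pos.ne' hrMpos.ne']
  have hlogM : Complex.log M.det = ((Real.log rM : ℝ) : ℂ) := by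
    rw [heM, ← Complex.ofReal_log hrMpos.le]
  have hlog12 : Complex.log (C₁ * C₂).det = ((Real.log r₁ + Real.log r₂ : ℝ) : ℂ) := by
    rw [det_mul, he1, he2, ← Complex.ofReal_mul, ← Complex.ofReal_log (by positivity),
      Real.log_mul hr1pos.ne' hr2pos.ne']
  unfold DKL
  rw [hlog1, hlog2, hlogM, hlog12]
  have : ((C₁ * M⁻¹ - 1).trace - ((Real.log r₁ - Real.log rM : ℝ) : ℂ)) +
      ((C₂ * M⁻¹ - 1).trace - ((Real.log r₂ - Real.log rM : ℝ) : ℂ))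
      = -(((Real.log r₁ - Real.log rM : ℝ) : ℂ) + ((Real.log r₂ - Real.log rM : ℝ) : ℂ)) := by
    linear_combination htr
  rw [this]
  push_cast
  ring
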